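/- Let G be a finite group and H a subgroup of odd index in G. Then H is pronormal in G if and only if H/O₂(G) is pronormal in G/O₂(G). -/

import Mathlib

open Pointwise

/-- `H` is pronormal in `G`: for every `g`, `H` and `H^g` are conjugate in `⟨H, H^g⟩`. -/
def Pronormal {G : Type*} [Group G] (H : Subgroup G) : Prop :=
  ∀ g : G, ∃ k ∈ (H ⊔ MulAut.conj g • H : Subgroup G),
    MulAut.conj k • H = MulAut.conj g • H

private lemma map_conj_smul {G G' : Type*} [Group G] [Group G'] (f : G →* G') (g : G)
    (H : Subgroup G) : (MulAut.conj g • H).map f = MulAut.conj (f g) • H.map f := by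
  rw [Subgroup.pointwise_smul_def, Subgroup.pointwise_smul_def,
    Subgroup.map_map (g := f) (f := (MulDistribMulAction.toMonoidEnd (MulAut G) G (MulAut.conj g) : G →* G)),
    Subgroup.map_map (f := f) (g := (MulDistribMulAction.toMonoidEnd (MulAut G') G' (MulAut.conj (f g)) : G' →* G'))]
  congr 1
  ext x
  simp

/-- A normal 2-subgroup is contained in any subgroup of odd index. -/
private lemma normal_two_le_of_odd_index {G : Type*} [Group G] [Finite G]
    {H O : Subgroup G} (hodd : Odd H.index) [O.Normal] (hO2 : IsPGroup 2 O) : O ≤ H := by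
  have : Fact (Nat.Prime 2) := ⟨Nat.prime_two⟩
  -- take a Sylow 2-subgroup of H and push it to G
  obtain ⟨Q⟩ : Nonempty (Sylow 2 H) := inferInstance
  set P : Subgroup G := (Q : Subgroup H).map H.subtype with hP
  have hPG : IsPGroup 2 P := Q.isPGroup'.map H.subtype
  have hPindex : ¬ (2 ∣ P.index) := by
    rw [hP, Subgroup.index_map_subtype]
    rw [Nat.odd_iff, ← Nat.two_dvd_ne_zero] at hodd
    intro h
    rcases (Nat.prime_two).dvd_mul.mp h with h | h
    · exact Q.not_dvd_index h
    · exact hodd h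
  have hPH : P ≤ H := Subgroup.map_subtype_le _
  -- P is a Sylow 2-subgroup of G
  set Psyl : Sylow 2 G := hPG.toSylow hPindex with hPsyl
  obtain ⟨R, hOR⟩ := hO2.exists_le_sylow
  obtain ⟨g, hg⟩ := MulAction.exists_smul_eq G R Psyl
  have : MulAut.conj g • O ≤ MulAut.conj g • (R : Subgroup G) :=
    Subgroup.pointwise_smul_le_pointwise_smul_iff.mpr hOR
  rw [Subgroup.Normal.conj_smul_eq_self] at this
  have hgR : (MulAut.conj g • (R : Subgroup G)) = (Psyl : Subgroup G) := by
    rw [← Sylow.coe_subgroup_smul, hg]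
  rw [hgR] at this
  exact this.trans hPH

theorem pronormal_iff_pronormal_quotient_O2
    {G : Type*} [Group G] [Finite G] (H : Subgroup G) (hodd : Odd H.index)
    (O : Subgroup G) [O.Normal] (hO2 : IsPGroup 2 O)
    (hOmax : ∀ P : Subgroup G, P.Normal → IsPGroup 2 P → P ≤ O) :
    Pronormal H ↔ Pronormal (H.map (QuotientGroup.mk' O)) := by
  have hOH : O ≤ H := normal_two_le_of_odd_index hodd hO2
  set f := QuotientGroup.mk' O with hf
  have hker : f.ker = O := QuotientGroup.ker_mk' O
  constructor
  · intro h g'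
    obtain ⟨g, rfl⟩ := QuotientGroup.mk'_surjective O g'
    obtain ⟨k, hk, hk2⟩ := h g
    refine ⟨f k, ?_, ?_⟩
    · rw [← map_conj_smul, ← Subgroup.map_sup]
      exact Subgroup.mem_map_of_mem f hk
    · rw [← map_conj_smul, ← map_conj_smul, hk2]
  · intro h g
    obtain ⟨k', hk', hk2'⟩ := h (f g)
    rw [← map_conj_smul, ← Subgroup.map_sup] at hk'
    obtain ⟨k, hk, rfl⟩ := hk'
    refine ⟨k, hk, ?_⟩
    have hOle : ∀ x : G, O ≤ MulAut.conj x • H := by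
      intro x
      calc O = MulAut.conj x • O := (Subgroup.Normal.conj_smul_eq_self x O).symm
        _ ≤ MulAut.conj x • H := Subgroup.pointwise_smul_le_pointwise_smul_iff.mpr hOH
    have hmap : (MulAut.conj k • H).map f = (MulAut.conj g • H).map f := by
      rw [map_conj_smul, map_conj_smul, hk2']
    have h1 := Subgroup.comap_map_eq f (MulAut.conj k • H)
    have h2 := Subgroup.comap_map_eq f (MulAut.conj g • H)
    rw [hker, sup_of_le_left (hOle k)] at h1
    rw [hker, sup_of_le_left (hOle g)] at h2
    rw [← h1, ← h2, hmap]
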